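/- Let L = q(x)·K[x]·∂/∂x be a polynomial Lie algebra in W₁(K), where q(x) ∈ K[x] has degree 1. Then every finite-dimensional Lie subalgebra of L either has dimension at most one over K or coincides with F_k = span_K( q(x)·∂/∂x, q(x)^k·∂/∂x ) for some integer k ≥ 2. -/

import Mathlib

open Polynomial

namespace W1Aux

variable {K : Type*} [Field K] [CharZero K]
set_option linter.unusedSectionVars false
set_option maxHeartbeats 1000000





/-- The Lie bracket on coefficient polynomials of vector fields. -/
noncomputable def brk (a b : K[X]) : K[X] := a * derivative b - derivative a * b

lemma ne_zero_of_one_le_natDegree {p : K[X]} (hp : 1 ≤ p.natDegree) : p ≠ 0 := by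
  intro h; simp [h] at hp

lemma derivative_stuff {p : K[X]} (hp : 1 ≤ p.natDegree) :
    (derivative p).natDegree = p.natDegree - 1 ∧
    (derivative p).coeff (p.natDegree - 1) = (p.natDegree : K) * p.leadingCoeff := by
  have hcast : ((p.natDegree - 1 : ℕ) : K) + 1 = (p.natDegree : K) := by
    rw [Nat.cast_sub hp]; ring
  have h1 : (derivative p).coeff (p.natDegree - 1) = (p.natDegree : K) * p.leadingCoeff := by
    rw [coeff_derivative]
    have h2 : p.natDegree - 1 + 1 = p.natDegree := by omega
    rw [h2, leadingCoeff, hcast]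
    ring
  refine ⟨le_antisymm (natDegree_derivative_le p) (le_natDegree_of_ne_zero ?_), h1⟩
  rw [h1]
  exact mul_ne_zero (Nat.cast_ne_zero.mpr (by omega))
    (leadingCoeff_ne_zero.mpr (ne_zero_of_one_le_natDegree hp))

lemma natDegree_brk_le {a b : K[X]} (ha : 1 ≤ a.natDegree) (hb : 1 ≤ b.natDegree) :
    (brk a b).natDegree ≤ a.natDegree + b.natDegree - 1 := by
  refine (natDegree_sub_le _ _).trans (max_le ?_ ?_)
  · exact natDegree_mul_le.trans (by have := natDegree_derivative_le b; omega)
  · exact natDegree_mul_le.trans (by have := natDegree_derivative_le a; omega)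

lemma coeff_brk {a b : K[X]} (ha : 1 ≤ a.natDegree) (hb : 1 ≤ b.natDegree) :
    (brk a b).coeff (a.natDegree + b.natDegree - 1)
      = ((b.natDegree : K) - (a.natDegree : K)) * (a.leadingCoeff * b.leadingCoeff) := by
  obtain ⟨hdb, hcb⟩ := derivative_stuff hb
  obtain ⟨hda, hca⟩ := derivative_stuff ha
  have e1 : a.natDegree + b.natDegree - 1 = a.natDegree + (derivative b).natDegree := by
    rw [hdb]; omega
  have e2 : a.natDegree + b.natDegree - 1 = (derivative a).natDegree + b.natDegree := by
    rw [hda]; omega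
  have lb : (derivative b).leadingCoeff = (b.natDegree : K) * b.leadingCoeff := by
    rw [leadingCoeff, hdb, hcb]
  have la : (derivative a).leadingCoeff = (a.natDegree : K) * a.leadingCoeff := by
    rw [leadingCoeff, hda, hca]
  have t1 : (a * derivative b).coeff (a.natDegree + b.natDegree - 1)
      = a.leadingCoeff * ((b.natDegree : K) * b.leadingCoeff) := by
    rw [e1, coeff_mul_degree_add_degree, lb]
  have t2 : (derivative a * b).coeff (a.natDegree + b.natDegree - 1)
      = ((a.natDegree : K) * a.leadingCoeff) * b.leadingCoeff := by
    rw [e2, coeff_mul_degree_add_degree, la]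
  rw [brk, coeff_sub, t1, t2]
  ring

lemma brk_deg {a b : K[X]} (ha : 1 ≤ a.natDegree) (hb : 1 ≤ b.natDegree)
    (hne : a.natDegree ≠ b.natDegree) :
    brk a b ≠ 0 ∧ (brk a b).natDegree = a.natDegree + b.natDegree - 1 := by
  have hcne : (brk a b).coeff (a.natDegree + b.natDegree - 1) ≠ 0 := by
    rw [coeff_brk ha hb]
    refine mul_ne_zero ?_ (mul_ne_zero
      (leadingCoeff_ne_zero.mpr (ne_zero_of_one_le_natDegree ha))
      (leadingCoeff_ne_zero.mpr (ne_zero_of_one_le_natDegree hb)))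
    intro h
    exact hne (by exact_mod_cast (sub_eq_zero.mp h).symm)
  exact ⟨fun h => hcne (by simp [h]),
    le_antisymm (natDegree_brk_le ha hb) (le_natDegree_of_ne_zero hcne)⟩

lemma exists_degree_bound (W : Submodule K K[X]) [FiniteDimensional K W] :
    ∃ N : ℕ, ∀ f ∈ W, f.natDegree ≤ N := by
  obtain ⟨s, hs⟩ := (Submodule.fg_iff_finiteDimensional W).mpr ‹_›
  refine ⟨s.sup Polynomial.natDegree, ?_⟩
  intro f hf
  rw [← hs] at hf
  induction hf using Submodule.span_induction with
  | mem x hx => exact Finset.le_sup hx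
  | zero => simp
  | add x y _ _ hx hy => exact (natDegree_add_le _ _).trans (max_le hx hy)
  | smul c x _ hx => exact (natDegree_smul_le _ _).trans hx




lemma eq_smul_X {f : K[X]} (h1 : f.natDegree ≤ 1) (h0 : f.coeff 0 = 0) :
    f = f.coeff 1 • X := by
  conv_lhs => rw [eq_X_add_C_of_natDegree_le_one h1]
  rw [h0, smul_eq_C_mul]
  simp

lemma core (W : Submodule K K[X]) [FiniteDimensional K W]
    (hdvd : ∀ f ∈ W, X ∣ f)
    (hbr : ∀ a ∈ W, ∀ b ∈ W, brk a b ∈ W) :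
    Module.finrank K W ≤ 1 ∨
      ∃ k : ℕ, 2 ≤ k ∧ W = Submodule.span K {(X : K[X]), X ^ k} := by
  by_cases hr : Module.finrank K W ≤ 1
  · exact Or.inl hr
  right
  push_neg at hr
  obtain ⟨N, hN⟩ := exists_degree_bound W
  have hdeg1 : ∀ f ∈ W, f ≠ 0 → 1 ≤ f.natDegree := by
    intro f hf h0
    have := natDegree_le_of_dvd (hdvd f hf) h0
    simpa using this
  have hW0 : ∃ f ∈ W, f ≠ 0 := by
    by_contra h
    push_neg at h
    have hbot : W = ⊥ := by
      ext x
      simp only [Submodule.mem_bot]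
      exact ⟨fun hx => by by_contra hne; exact hne (h x hx), fun hx => hx ▸ W.zero_mem⟩
    rw [hbot, finrank_bot] at hr
    omega
  set S : Set ℕ := {d | ∃ f ∈ W, f ≠ 0 ∧ f.natDegree = d} with hS
  have hSne : S.Nonempty := by
    obtain ⟨f, hf, h0⟩ := hW0
    exact ⟨f.natDegree, f, hf, h0, rfl⟩
  have hSbdd : BddAbove S := by
    refine ⟨N, fun d hd => ?_⟩
    obtain ⟨f, hf, _, rfl⟩ := hd
    exact hN f hf
  set n := sSup S with hn
  obtain ⟨v, hvW, hv0, hvdeg⟩ : n ∈ S := Nat.sSup_mem hSne hSbdd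
  have hmax : ∀ f ∈ W, f ≠ 0 → f.natDegree ≤ n := fun f hf h0 =>
    le_csSup hSbdd ⟨f, hf, h0, rfl⟩
  have hn1 : 1 ≤ n := hvdeg ▸ hdeg1 v hvW hv0
  have hvdeg1 : 1 ≤ v.natDegree := hvdeg ▸ hn1
  have hvn : v.coeff n ≠ 0 := by
    rw [← hvdeg]
    exact leadingCoeff_ne_zero.mpr hv0
  -- Claim A
  have claimA : ∀ f ∈ W, f ≠ 0 → f.natDegree < n → ∃ c : K, c ≠ 0 ∧ f = c • X := by
    intro f hf h0 hlt
    have hm1 : 1 ≤ f.natDegree := hdeg1 f hf h0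
    have hne : f.natDegree ≠ v.natDegree := by omega
    obtain ⟨hb0, hbdeg⟩ := brk_deg hm1 hvdeg1 hne
    have hbW : brk f v ∈ W := hbr f hf v hvW
    have := hmax _ hbW hb0
    rw [hbdeg, hvdeg] at this
    have hdeq : f.natDegree = 1 := by omega
    have hc0 : f.coeff 0 = 0 := X_dvd_iff.mp (hdvd f hf)
    refine ⟨f.coeff 1, ?_, eq_smul_X hdeq.le hc0⟩
    intro hc
    exact h0 (by rw [eq_smul_X hdeq.le hc0, hc, zero_smul])
  -- degree reduction
  have hreduce : ∀ f ∈ W, f.coeff n = 0 → f ≠ 0 → f.natDegree < n := by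
    intro f hf hc h0
    rcases lt_or_eq_of_le (hmax f hf h0) with h | h
    · exact h
    · exfalso
      apply leadingCoeff_ne_zero.mpr h0
      rw [leadingCoeff, h]
      exact hc
  -- X ∈ W
  have hnotle : ¬ W ≤ Submodule.span K {v} := by
    intro hle
    have hfr := Submodule.finrank_mono hle
    rw [finrank_span_singleton hv0] at hfr
    omega
  obtain ⟨u, huW, hu⟩ := SetLike.not_le_iff_exists.mp hnotle
  have hXW : X ∈ W := by
    set g : K[X] := u - (u.coeff n / v.coeff n) • v with hg
    have hgW : g ∈ W := W.sub_mem huW (W.smul_mem _ hvW)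
    have hgc : g.coeff n = 0 := by
      rw [hg, coeff_sub, coeff_smul, smul_eq_mul]
      field_simp
      simp
    have hg0 : g ≠ 0 := by
      intro h
      apply hu
      rw [sub_eq_zero] at h
      exact h ▸ Submodule.smul_mem _ _ (Submodule.mem_span_singleton_self v)
    obtain ⟨c, hc0, hcg⟩ := claimA g hgW hg0 (hreduce g hgW hgc hg0)
    have : X = c⁻¹ • g := by rw [hcg, smul_smul, inv_mul_cancel₀ hc0, one_smul]
    rw [this]
    exact W.smul_mem _ hgW
  -- n ≥ 2
  have hn2 : 2 ≤ n := by
    by_contra h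
    have hn1' : n = 1 := by omega
    have hle : W ≤ Submodule.span K {(X : K[X])} := by
      intro f hf
      by_cases h0 : f = 0
      · exact h0 ▸ Submodule.zero_mem _
      · have h1 : f.natDegree ≤ 1 := hn1' ▸ hmax f hf h0
        rw [eq_smul_X h1 (X_dvd_iff.mp (hdvd f hf))]
        exact Submodule.smul_mem _ _ (Submodule.mem_span_singleton_self X)
    have hfr := Submodule.finrank_mono hle
    rw [finrank_span_singleton (X_ne_zero : (X : K[X]) ≠ 0)] at hfr
    omega
  -- Claim B : every element of W is a combination of X and v
  have claimB : ∀ f ∈ W, ∃ c d : K, f = c • X + d • v := by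
    intro f hf
    set d := f.coeff n / v.coeff n with hd
    set g : K[X] := f - d • v with hg
    have hgW : g ∈ W := W.sub_mem hf (W.smul_mem _ hvW)
    have hgc : g.coeff n = 0 := by
      rw [hg, coeff_sub, coeff_smul, smul_eq_mul, hd]
      field_simp
      simp
    by_cases h0 : g = 0
    · refine ⟨0, d, ?_⟩
      rw [zero_smul, zero_add]
      rw [sub_eq_zero] at h0
      exact h0
    · obtain ⟨c, hc0, hcg⟩ := claimA g hgW h0 (hreduce g hgW hgc h0)
      refine ⟨c, d, ?_⟩
      have : f = g + d • v := by rw [hg]; ring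
      rw [this, hcg]
  -- Claim C : v = v₁ X + vₙ Xⁿ
  obtain ⟨lam, mu, heq⟩ := claimB (brk X v) (hbr X hXW v hvW)
  have hXd : ∀ j : ℕ, (X * derivative v).coeff j = v.coeff j * (j : K) := by
    intro j
    cases j with
    | zero => simp [mul_coeff_zero]
    | succ k =>
      rw [coeff_X_mul, coeff_derivative]
      push_cast
      ring
  have E : ∀ j : ℕ, v.coeff j * (j : K) - v.coeff j =
      lam * (X : K[X]).coeff j + mu * v.coeff j := by
    intro j
    have h := congrArg (fun p : K[X] => p.coeff j) heq
    simpa [brk, coeff_sub, coeff_add, coeff_smul, derivative_X, hXd j, smul_eq_mul] using h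
  have hXcoeff : ∀ j : ℕ, j ≠ 1 → (X : K[X]).coeff j = 0 := by
    intro j hj
    rw [coeff_X, if_neg (fun h => hj h.symm)]
  have hmu : mu = (n : K) - 1 := by
    have h := E n
    rw [hXcoeff n (by omega)] at h
    have h' : v.coeff n * ((n : K) - 1) = v.coeff n * mu := by linear_combination h
    exact (mul_left_cancel₀ hvn h').symm
  have hvj : ∀ j : ℕ, 2 ≤ j → j ≠ n → v.coeff j = 0 := by
    intro j hj2 hjn
    have h := E j
    rw [hXcoeff j (by omega), hmu] at h
    have h' : v.coeff j * ((j : K) - (n : K)) = 0 := by linear_combination h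
    rcases mul_eq_zero.mp h' with h'' | h''
    · exact h''
    · exact absurd (by exact_mod_cast sub_eq_zero.mp h'' : j = n) hjn
  have hv0c : v.coeff 0 = 0 := X_dvd_iff.mp (hdvd v hvW)
  have hvform : v = v.coeff 1 • X + v.coeff n • X ^ n := by
    ext j
    simp only [coeff_add, coeff_smul, smul_eq_mul, coeff_X, coeff_X_pow]
    by_cases h1 : j = 1
    · subst h1
      rw [if_pos rfl, if_neg (by omega)]
      ring
    · rw [if_neg (fun h => h1 h.symm)]
      by_cases h2 : j = n
      · subst h2
        rw [if_pos rfl]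
        ring
      · rw [if_neg h2]
        rcases Nat.lt_or_ge j 2 with hjlt | hjge
        · interval_cases j
          · simpa using hv0c
          · omega
        · simpa using hvj j hjge h2
  refine ⟨n, hn2, le_antisymm ?_ ?_⟩
  · intro f hf
    obtain ⟨c, d, rfl⟩ := claimB f hf
    have hXmem : (X : K[X]) ∈ Submodule.span K {(X : K[X]), X ^ n} :=
      Submodule.subset_span (Set.mem_insert _ _)
    have hXnmem : (X : K[X]) ^ n ∈ Submodule.span K {(X : K[X]), X ^ n} :=
      Submodule.subset_span (Set.mem_insert_of_mem _ rfl)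
    have hvmem : v ∈ Submodule.span K {(X : K[X]), X ^ n} := by
      rw [hvform]
      exact Submodule.add_mem _ (Submodule.smul_mem _ _ hXmem) (Submodule.smul_mem _ _ hXnmem)
    exact Submodule.add_mem _ (Submodule.smul_mem _ _ hXmem) (Submodule.smul_mem _ _ hvmem)
  · rw [Submodule.span_le]
    intro x hx
    rcases Set.mem_insert_iff.mp hx with rfl | hx'
    · exact hXW
    · rw [Set.mem_singleton_iff.mp hx']
      have haux : ∀ c1 cn : K, v = c1 • X + cn • X ^ n → v - c1 • X = cn • (X : K[X]) ^ n := by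
        intro c1 cn h
        rw [h]
        abel
      have hsm := haux _ _ hvform
      have : (X : K[X]) ^ n = (v.coeff n)⁻¹ • (v - v.coeff 1 • X) := by
        rw [hsm, smul_smul, inv_mul_cancel₀ hvn, one_smul]
      rw [this]
      exact W.smul_mem _ (W.sub_mem hvW (W.smul_mem _ hXW))



lemma coreq (q : K[X]) (hq : q.natDegree = 1) (V : Submodule K K[X]) [FiniteDimensional K V]
    (hdvd : ∀ f ∈ V, q ∣ f) (hbr : ∀ a ∈ V, ∀ b ∈ V, brk a b ∈ V) :
    Module.finrank K V ≤ 1 ∨ ∃ k : ℕ, 2 ≤ k ∧ V = Submodule.span K {q, q ^ k} := by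
  obtain ⟨c, hc, b, hqe⟩ := natDegree_eq_one.mp hq
  set r : K[X] := C c⁻¹ * (X - C b) with hr
  have h1 : aeval q r = X := by
    rw [hr, ← hqe]
    simp only [map_mul, map_sub, aeval_X, aeval_C, algebraMap_eq]
    rw [add_sub_cancel_right, ← mul_assoc, ← C_mul, inv_mul_cancel₀ hc, C_1, one_mul]
  have h2 : aeval r q = X := by
    rw [← hqe]
    simp only [map_add, map_mul, aeval_X, aeval_C, algebraMap_eq]
    rw [hr, ← mul_assoc, ← C_mul, mul_inv_cancel₀ hc, C_1, one_mul, sub_add_cancel]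
  set σ : K[X] ≃ₐ[K] K[X] := AlgEquiv.ofAlgHom (aeval q) (aeval r)
    (algHom_ext (by simpa using h1)) (algHom_ext (by simpa using h2)) with hσ
  have hσapp : ∀ p : K[X], σ p = aeval q p := fun p => rfl
  have hσX : σ X = q := by rw [hσapp, aeval_X]
  have hqd : derivative q = C c := by
    rw [← hqe]; simp
  have hchain : ∀ p : K[X], derivative (σ p) = C c * σ (derivative p) := by
    intro p
    rw [hσapp, hσapp, ← comp_eq_aeval, ← comp_eq_aeval, derivative_comp, hqd]
  have hbrσ : ∀ a b : K[X], brk (σ a) (σ b) = c • σ (brk a b) := by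
    intro a b
    rw [smul_eq_C_mul]
    simp only [brk, hchain a, hchain b, map_sub, map_mul]
    ring
  set e : K[X] ≃ₗ[K] K[X] := σ.toLinearEquiv with he
  have heapp : ∀ p : K[X], e p = σ p := fun p => rfl
  set W : Submodule K K[X] := V.comap (e : K[X] →ₗ[K] K[X]) with hW
  have hmemW : ∀ f : K[X], f ∈ W ↔ σ f ∈ V := fun f => Iff.rfl
  have hmapW : W.map (e : K[X] →ₗ[K] K[X]) = V :=
    Submodule.map_comap_eq_of_surjective e.surjective V
  have eqWV : W ≃ₗ[K] V := LinearEquiv.ofSubmodule' e V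
  have : FiniteDimensional K W := LinearEquiv.finiteDimensional eqWV.symm
  have hWdvd : ∀ f ∈ W, X ∣ f := by
    intro f hf
    obtain ⟨t, ht⟩ := hdvd (σ f) ((hmemW f).mp hf)
    refine ⟨σ.symm t, ?_⟩
    have := congrArg σ.symm ht
    simpa [map_mul, ← hσX] using this
  have hWbr : ∀ a ∈ W, ∀ b ∈ W, brk a b ∈ W := by
    intro a ha b hb
    rw [hmemW]
    have hmem : brk (σ a) (σ b) ∈ V := hbr _ ((hmemW a).mp ha) _ ((hmemW b).mp hb)
    rw [hbrσ] at hmem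
    have := V.smul_mem c⁻¹ hmem
    rwa [smul_smul, inv_mul_cancel₀ hc, one_smul] at this
  rcases core W hWdvd hWbr with h | ⟨k, hk, hWspan⟩
  · left
    rw [← eqWV.finrank_eq]
    exact h
  · right
    refine ⟨k, hk, ?_⟩
    rw [← hmapW, hWspan, Submodule.map_span]
    congr 1
    rw [Set.image_insert_eq, Set.image_singleton]
    have e1 : (e : K[X] →ₗ[K] K[X]) X = q := hσX
    have e2 : (e : K[X] →ₗ[K] K[X]) (X ^ k) = q ^ k := by
      show σ (X ^ k) = q ^ k
      rw [map_pow, hσX]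
    rw [e1, e2]





/-- `f ↦ f • d/dx` as a `K`-linear map into derivations. -/
noncomputable def Phi : K[X] →ₗ[K] Derivation K K[X] K[X] where
  toFun f := f • Polynomial.derivative'
  map_add' a b := add_smul a b _
  map_smul' c f := smul_assoc c f _

lemma Phi_apply (f : K[X]) : (Phi f : Derivation K K[X] K[X]) = f • Polynomial.derivative' := rfl

lemma Phi_apply_apply (f p : K[X]) : (Phi f) p = f * derivative p := rfl

lemma Phi_injective : Function.Injective (Phi : K[X] →ₗ[K] Derivation K K[X] K[X]) := by
  intro f g h
  have := congrArg (fun D : Derivation K K[X] K[X] => D X) h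
  simpa [Phi_apply_apply] using this

lemma Phi_bracket (a b : K[X]) :
    ⁅(Phi a : Derivation K K[X] K[X]), Phi b⁆ = Phi (brk a b) := by
  apply Polynomial.derivation_ext
  rw [Derivation.commutator_apply]
  simp only [Phi_apply_apply, brk, derivative_X, mul_one]
  ring



end W1Aux

set_option maxHeartbeats 1000000 in
open Polynomial W1Aux in
theorem finite_dim_subalgebras_deg_one
    (K : Type*) [Field K] [IsAlgClosed K] [CharZero K]
    (q : Polynomial K) (hq : q.natDegree = 1)
    (F : LieSubalgebra K (Derivation K (Polynomial K) (Polynomial K)))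
    (hFL : (F : Set (Derivation K (Polynomial K) (Polynomial K))) ⊆
      {D | ∃ f : Polynomial K, D = (q * f) • Polynomial.derivative'})
    [FiniteDimensional K F] :
    Module.finrank K F ≤ 1 ∨
    ∃ k : ℕ, 2 ≤ k ∧
      (F : Set (Derivation K (Polynomial K) (Polynomial K))) =
        (Submodule.span K {q • (Polynomial.derivative' :
            Derivation K (Polynomial K) (Polynomial K)),
          (q ^ k) • (Polynomial.derivative' :
            Derivation K (Polynomial K) (Polynomial K))} :
          Set (Derivation K (Polynomial K) (Polynomial K))) := by
  classical
  set Φ : K[X] →ₗ[K] Derivation K K[X] K[X] := Phi with hΦ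
  set V : Submodule K K[X] := (F : Submodule K (Derivation K K[X] K[X])).comap Φ with hV
  have hmemV : ∀ f : K[X], f ∈ V ↔ Φ f ∈ F := fun f =>
    LieSubalgebra.mem_toSubmodule F
  have hmapV : V.map Φ = (F : Submodule K (Derivation K K[X] K[X])) := by
    apply le_antisymm (Submodule.map_comap_le _ _)
    intro D hD
    obtain ⟨f, hDf⟩ := hFL ((LieSubalgebra.mem_toSubmodule F).mp hD)
    refine ⟨q * f, ?_, ?_⟩
    · show Φ (q * f) ∈ (F : Submodule K (Derivation K K[X] K[X]))
      have : Φ (q * f) = D := by rw [hDf]; rfl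
      rwa [this]
    · show Φ (q * f) = D
      rw [hDf]; rfl
  have hVdvd : ∀ f ∈ V, q ∣ f := by
    intro f hf
    obtain ⟨g, hg⟩ := hFL ((hmemV f).mp hf)
    exact ⟨g, Phi_injective (by rw [hg]; rfl)⟩
  have hVbr : ∀ a ∈ V, ∀ b ∈ V, brk a b ∈ V := by
    intro a ha b hb
    rw [hmemV, ← Phi_bracket]
    exact F.lie_mem ((hmemV a).mp ha) ((hmemV b).mp hb)
  have eVm : V ≃ₗ[K] (V.map Φ) := Submodule.equivMapOfInjective Φ Phi_injective V
  have eV : V ≃ₗ[K] F := eVm.trans (LinearEquiv.ofEq _ _ hmapV)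
  have : FiniteDimensional K V := LinearEquiv.finiteDimensional eV.symm
  rcases coreq q hq V hVdvd hVbr with h | ⟨k, hk, hVspan⟩
  · left
    rw [← eV.finrank_eq]
    exact h
  · right
    refine ⟨k, hk, ?_⟩
    have hsub : (F : Submodule K (Derivation K K[X] K[X])) =
        Submodule.span K {q • (Polynomial.derivative' : Derivation K K[X] K[X]),
          (q ^ k) • Polynomial.derivative'} := by
      rw [← hmapV, hVspan, Submodule.map_span, Set.image_insert_eq, Set.image_singleton]
      rfl
    calc (F : Set (Derivation K K[X] K[X]))
        = ((F : Submodule K (Derivation K K[X] K[X])) : Set (Derivation K K[X] K[X])) := by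
          rw [LieSubalgebra.coe_toSubmodule]
      _ = _ := by rw [hsub]
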